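/- For every discrete feasible strategy (p, I) with stopping CDF (P_t) and every n ≥ 0, it holds that ∑_{t=0}^{n} P_t ≤ ∑_{t=0}^{n} (1 − (1 − c/Ī)^t). In particular, when the strategy is exhaustive (its expected stopping time ∑_{t=1}^∞ (1 − P_{t−1}) equals Ī/c), its stopping time distribution second-order stochastically dominates the geometric distribution with parameter c/Ī, i.e., the geometric distribution is a mean-preserving spread of it. -/

import Mathlib

/-- A discrete feasible strategy for the relaxed dynamic information-acquisition
problem with per-period learning capacity `c` and target information measure `Ibar`. -/
def DiscreteFeasible (c Ibar : ℝ) (p I : ℕ → ℝ) : Prop :=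
  (∀ t, 1 ≤ t → p t ∈ Set.Icc (0:ℝ) 1) ∧
  (∀ t, 1 ≤ t → 0 ≤ I t) ∧
  I 1 = 0 ∧
  (∀ t, 1 ≤ t → (Ibar - I t) * p t + (I (t+1) - I t) * (1 - p t) ≤ c)

/-- The stopping CDF of a strategy: `P 0 = 0` and `P t = P (t-1) + (1 - P (t-1)) * p t`. -/
def stoppingCDF (p : ℕ → ℝ) : ℕ → ℝ
  | 0 => 0
  | t + 1 => stoppingCDF p t + (1 - stoppingCDF p t) * p (t + 1)

/-- For every discrete feasible strategy, the partial sums of its stopping CDF are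
dominated by those of the geometric CDF `1 − (1 − c/Ī)^t`; in particular an
exhaustive strategy (expected stopping time `= Ī/c`) has the same mean as the
geometric distribution with parameter `c/Ī`, so the geometric distribution is a
mean-preserving spread of its stopping time distribution (second-order stochastic
dominance). -/
theorem stoppingCDF_partial_sums_le_geometric
    (c Ibar : ℝ) (hc : 0 < c) (hcI : c < Ibar)
    (p I : ℕ → ℝ) (hfeas : DiscreteFeasible c Ibar p I) :
    (∀ n : ℕ, ∑ t ∈ Finset.range (n + 1), stoppingCDF p t ≤
      ∑ t ∈ Finset.range (n + 1), (1 - (1 - c / Ibar) ^ t)) ∧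
    ((∑' t : ℕ, (1 - stoppingCDF p t)) = Ibar / c →
      ((∑' t : ℕ, (1 - stoppingCDF p t)) = ∑' t : ℕ, (1 - c / Ibar) ^ t ∧
        ∀ n : ℕ, ∑ t ∈ Finset.range (n + 1), stoppingCDF p t ≤
          ∑ t ∈ Finset.range (n + 1), (1 - (1 - c / Ibar) ^ t))) := by
  obtain ⟨hp, hI, hI1, hcon⟩ := hfeas
  have hIbar : (0:ℝ) < Ibar := hc.trans hcI
  set q : ℝ := 1 - c / Ibar with hq
  clear_value q
  have hq0 : 0 < q := by
    have : c / Ibar < 1 := (div_lt_one hIbar).mpr hcI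
    rw [hq]; linarith
  have hq1 : q < 1 := by
    have : 0 < c / Ibar := div_pos hc hIbar
    rw [hq]; linarith
  have hIq : Ibar * (1 - q) = c := by
    rw [hq]; field_simp; ring
  set S : ℕ → ℝ := fun t => 1 - stoppingCDF p t with hS
  clear_value S
  have hP : ∀ t, stoppingCDF p t = 1 - S t := by intro t; simp [hS]
  have hS0 : S 0 = 1 := by simp [hS, stoppingCDF]
  have hSrec : ∀ t, S (t+1) = S t * (1 - p (t+1)) := by
    intro t; simp only [hS, stoppingCDF]; ring
  have hSnonneg : ∀ t, 0 ≤ S t := by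
    intro t; induction t with
    | zero => rw [hS0]; norm_num
    | succ n ih =>
      rw [hSrec]
      have hpn := hp (n+1) (by omega)
      have h1 := hpn.1
      have h2 := hpn.2
      nlinarith
  -- the slack from summing the feasibility constraints
  have hD : ∀ n : ℕ,
      0 ≤ c * ∑ t ∈ Finset.range n, S t - Ibar * (1 - S n) - I (n+1) * S n := by
    intro n; induction n with
    | zero => simp [hS0, hI1]
    | succ n ih =>
      have hcon' := hcon (n+1) (by omega)
      have key := mul_le_mul_of_nonneg_right hcon' (hSnonneg n)
      have hs := hSrec n
      rw [Finset.sum_range_succ, hs]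
      nlinarith [key, ih]
  -- main induction
  have main : ∀ n : ℕ, Ibar * (1 - q^(n+1)) ≤ c * ∑ t ∈ Finset.range (n+1), S t := by
    intro n; induction n with
    | zero =>
      rw [Finset.sum_range_one, hS0, pow_one]
      nlinarith [hIq]
    | succ n ih =>
      rw [Finset.sum_range_succ]
      rcases le_or_gt (q^(n+1)) (S (n+1)) with h | h
      · have h3 : c * q^(n+1) ≤ c * S (n+1) := mul_le_mul_of_nonneg_left h hc.le
        have h2 : Ibar * q^(n+1+1) = Ibar * q^(n+1) - c * q^(n+1) := by
          linear_combination (-(q^(n+1))) * hIq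
        linarith [ih, h3, h2]
      · have hd := hD (n+1)
        have hI2 : 0 ≤ I (n+2) := hI (n+2) (by omega)
        have hSn : 0 ≤ S (n+1) := hSnonneg (n+1)
        have h4 : (Ibar - c) * S (n+1) ≤ (Ibar - c) * q^(n+1) :=
          mul_le_mul_of_nonneg_left h.le (by linarith)
        have h5 : (Ibar - c) * q^(n+1) = Ibar * q^(n+2) := by
          have : Ibar - c = Ibar * q := by nlinarith [hIq]
          rw [this]; ring
        nlinarith [hd, h4, h5, mul_nonneg hI2 hSn]
  have part1 : ∀ n : ℕ, ∑ t ∈ Finset.range (n + 1), stoppingCDF p t ≤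
      ∑ t ∈ Finset.range (n + 1), (1 - q ^ t) := by
    intro n
    have hm := main n
    have gm := geom_sum_mul q (n+1)
    have hgs : c * ∑ t ∈ Finset.range (n+1), q^t = Ibar * (1 - q^(n+1)) := by
      linear_combination (-(∑ t ∈ Finset.range (n+1), q^t)) * hIq - Ibar * gm
    have h6 : ∑ t ∈ Finset.range (n+1), q ^ t ≤ ∑ t ∈ Finset.range (n+1), S t := by
      have h7 : c * ∑ t ∈ Finset.range (n+1), q^t ≤ c * ∑ t ∈ Finset.range (n+1), S t := by
        linarith
      exact le_of_mul_le_mul_left h7 hc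
    simp only [hP, Finset.sum_sub_distrib]
    linarith
  refine ⟨part1, fun hexh => ⟨?_, part1⟩⟩
  rw [hexh, tsum_geometric_of_lt_one hq0.le hq1]
  rw [show (1:ℝ) - q = c / Ibar by rw [hq]; ring, inv_div]
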